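/- If ω is a finite positive Borel measure on [0,1) such that for some C > 0 and γ > 0 one has ∫₀ᵗ ((1-t)/(1-s))^γ dω(s) ≤ C·ω̂(t) for all 0 ≤ t < 1, then ((1-t)/(1-r))^γ · ω̂(r) ≤ (C+1)·ω̂(t) for all 0 ≤ r ≤ t < 1; in particular ω̂ is doubling. -/

import Mathlib

open MeasureTheory Set

theorem stmt_3 (ω : Measure ℝ) [IsFiniteMeasure ω] (C γ : ℝ) (hC : 0 < C) (hγ : 0 < γ)
    (h : ∀ t : ℝ, 0 ≤ t → t < 1 →
      (∫ s in Ico (0 : ℝ) t, ((1 - t) / (1 - s)) ^ γ ∂ω) ≤ C * (ω (Ico t 1)).toReal) :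
    (∀ r t : ℝ, 0 ≤ r → r ≤ t → t < 1 →
      ((1 - t) / (1 - r)) ^ γ * (ω (Ico r 1)).toReal ≤ (C + 1) * (ω (Ico t 1)).toReal) ∧
    ∃ C'' : ℝ, 0 < C'' ∧ ∀ r : ℝ, 0 ≤ r → r < 1 →
      (ω (Ico r 1)).toReal ≤ C'' * (ω (Ico ((1 + r) / 2) 1)).toReal := by
  have main : ∀ r t : ℝ, 0 ≤ r → r ≤ t → t < 1 →
      ((1 - t) / (1 - r)) ^ γ * (ω (Ico r 1)).toReal ≤ (C + 1) * (ω (Ico t 1)).toReal := by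
    intro r t hr hrt ht
    have hr1 : r < 1 := lt_of_le_of_lt hrt ht
    have h1t : (0:ℝ) < 1 - t := by linarith
    have h1r : (0:ℝ) < 1 - r := by linarith
    set c : ℝ := ((1 - t) / (1 - r)) ^ γ with hc
    have hc0 : 0 ≤ c := Real.rpow_nonneg (le_of_lt (div_pos h1t h1r)) γ
    have hc1 : c ≤ 1 := Real.rpow_le_one (le_of_lt (div_pos h1t h1r))
      (div_le_one_of_le₀ (by linarith) h1r.le) hγ.le
    -- split the measure
    have hsplit : ω (Ico r 1) = ω (Ico r t) + ω (Ico t 1) := by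
      rw [← measure_union (Ico_disjoint_Ico_same) measurableSet_Ico,
        Ico_union_Ico_eq_Ico hrt ht.le]
    have hA : ω (Ico r t) ≠ ⊤ := measure_ne_top ω _
    have hB : ω (Ico t 1) ≠ ⊤ := measure_ne_top ω _
    have hsplit' : (ω (Ico r 1)).toReal = (ω (Ico r t)).toReal + (ω (Ico t 1)).toReal := by
      rw [hsplit, ENNReal.toReal_add hA hB]
    set f : ℝ → ℝ := fun s => ((1 - t) / (1 - s)) ^ γ with hf
    have hfm : AEStronglyMeasurable f (ω.restrict (Ico (0:ℝ) t)) := by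
      apply ContinuousOn.aestronglyMeasurable _ measurableSet_Ico
      apply ContinuousOn.rpow_const
      · apply continuousOn_const.div (continuousOn_const.sub continuousOn_id)
        intro s hs hcon
        have h2 := sub_eq_zero.mp hcon
        simp only [id] at h2
        have := hs.2
        linarith
      · exact fun x hx => Or.inr hγ.le
    have hup : ∀ s ∈ Ico (0:ℝ) t, f s ≤ 1 := by
      intro s hs
      have h1s : (0:ℝ) < 1 - s := by have := hs.2; linarith
      exact Real.rpow_le_one (le_of_lt (div_pos h1t h1s))
        (div_le_one_of_le₀ (by linarith [hs.2]) h1s.le) hγ.le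
    have hlow : ∀ s ∈ Ico r t, c ≤ f s := by
      intro s hs
      have h1s : (0:ℝ) < 1 - s := by have := hs.2; linarith
      apply Real.rpow_le_rpow (le_of_lt (div_pos h1t h1r))
      · exact div_le_div_of_nonneg_left h1t.le h1s (by linarith [hs.1])
      · exact hγ.le
    have hfi : IntegrableOn f (Ico (0:ℝ) t) ω := by
      apply Integrable.mono' (integrable_const (1:ℝ))
        hfm
      refine (ae_restrict_iff' measurableSet_Ico).2 (Filter.Eventually.of_forall ?_)
      intro s hs
      have h1s : (0:ℝ) < 1 - s := by have := hs.2; linarith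
      have h0 : 0 ≤ f s := Real.rpow_nonneg (le_of_lt (div_pos h1t h1s)) γ
      rw [Real.norm_eq_abs, abs_of_nonneg h0]
      exact hup s hs
    have hsub : Ico r t ⊆ Ico (0:ℝ) t := Ico_subset_Ico hr le_rfl
    -- c * ω(Ico r t) ≤ ∫_{Ico r t} f
    have h1 : c * (ω (Ico r t)).toReal ≤ ∫ s in Ico r t, f s ∂ω := by
      have := setIntegral_mono_on (integrable_const c) (hfi.mono_set hsub)
        measurableSet_Ico (fun s hs => hlow s hs)
      simpa [mul_comm, Measure.real] using this
    have h2 : (∫ s in Ico r t, f s ∂ω) ≤ ∫ s in Ico (0:ℝ) t, f s ∂ω := by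
      apply setIntegral_mono_set hfi
      · refine (ae_restrict_iff' measurableSet_Ico).2 (Filter.Eventually.of_forall ?_)
        intro s hs
        have h1s : (0:ℝ) < 1 - s := by have := hs.2; linarith
        exact Real.rpow_nonneg (le_of_lt (div_pos h1t h1s)) γ
      · exact Filter.Eventually.of_forall hsub
    have h3 : c * (ω (Ico r t)).toReal ≤ C * (ω (Ico t 1)).toReal :=
      le_trans h1 (le_trans h2 (h t (le_trans hr hrt) ht))
    have h4 : c * (ω (Ico t 1)).toReal ≤ 1 * (ω (Ico t 1)).toReal :=
      mul_le_mul_of_nonneg_right hc1 ENNReal.toReal_nonneg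
    calc c * (ω (Ico r 1)).toReal
        = c * (ω (Ico r t)).toReal + c * (ω (Ico t 1)).toReal := by
          rw [hsplit']; ring
      _ ≤ C * (ω (Ico t 1)).toReal + 1 * (ω (Ico t 1)).toReal := add_le_add h3 h4
      _ = (C + 1) * (ω (Ico t 1)).toReal := by ring
  refine ⟨main, (C + 1) * 2 ^ γ, by positivity, ?_⟩
  intro r hr hr1
  set t := (1 + r) / 2 with htdef
  have hrt : r ≤ t := by rw [htdef]; linarith
  have ht1 : t < 1 := by rw [htdef]; linarith
  have key := main r t hr hrt ht1
  have hratio : (1 - t) / (1 - r) = 1 / 2 := by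
    rw [htdef, show (1:ℝ) - (1 + r)/2 = (1 - r)/2 from by ring, div_div, mul_comm,
      ← div_div, div_self (by linarith : (1:ℝ) - r ≠ 0)]
  rw [hratio] at key
  have h2γ : (0:ℝ) < (1/2 : ℝ) ^ γ := Real.rpow_pos_of_pos (by norm_num) γ
  have h2γ' : ((1:ℝ)/2) ^ γ * (2:ℝ) ^ γ = 1 := by
    rw [← Real.mul_rpow (by norm_num) (by norm_num)]
    norm_num
  calc (ω (Ico r 1)).toReal
      = ((1/2:ℝ) ^ γ * (ω (Ico r 1)).toReal) * 2 ^ γ := by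
        rw [mul_right_comm, h2γ', one_mul]
    _ ≤ ((C + 1) * (ω (Ico t 1)).toReal) * 2 ^ γ :=
        mul_le_mul_of_nonneg_right key (Real.rpow_nonneg (by norm_num) γ)
    _ = (C + 1) * 2 ^ γ * (ω (Ico t 1)).toReal := by ring
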